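/- Let γ>1, C>0, Q>1. There exists δ > 0, depending only on γ, C and Q, with the following property: for every α ∈ B₀(γ,C,Q) and every Jost solution F for α, the Jost function Π_α(z) = F₁(z,0) − F₂(z,0) has no zeros in the disk {z ∈ ℂ : |z| < 1+δ}; that is, the associated CMV operator has no resonances in that disk. -/

import Mathlib

open Complex Filter
open scoped ComplexConjugate Topology

noncomputable section

def cmvZeta (n : ℕ) (z : ℂ) : ℂ := if Odd n then z else 1

def enorm2 (v : ℂ × ℂ) : ℝ := Real.sqrt (‖v.1‖ ^ 2 + ‖v.2‖ ^ 2)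

def IsJostSolution (α : ℕ → ℂ) (F : ℂ → ℕ → ℂ × ℂ) : Prop :=
  (∀ z : ℂ, ∃ M : ℝ, ∀ k : ℕ, enorm2 (F z k) ≤ M) ∧
  ∀ (z : ℂ) (k : ℕ),
    Summable (fun n : ℕ => ‖α (k + 1 + n) * cmvZeta (k + 1 + n) z * (F z (k + 1 + n)).2‖) ∧
    Summable (fun n : ℕ => ‖z ^ n * conj (α (k + 1 + n)) * cmvZeta (k + 1) z * (F z (k + 1 + n)).1‖) ∧
    (F z k).1 = 1 - ∑' n : ℕ, α (k + 1 + n) * cmvZeta (k + 1 + n) z * (F z (k + 1 + n)).2 ∧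
    (F z k).2 = - ∑' n : ℕ, z ^ n * conj (α (k + 1 + n)) * cmvZeta (k + 1) z * (F z (k + 1 + n)).1

def SuperExpDecay (γ C : ℝ) (α : ℕ → ℂ) : Prop :=
  ∀ n : ℕ, 1 ≤ n → ‖α n‖ ≤ C * Real.exp (-(n : ℝ) ^ γ)

def MemB0 (γ C Q : ℝ) (α : ℕ → ℂ) : Prop :=
  (∀ k : ℕ, 1 ≤ k → ‖α k‖ < 1) ∧
  SuperExpDecay γ C α ∧
  1 / Q ≤ ∏' j : ℕ, (1 - ‖α (j + 1)‖)

def jostPi (F : ℂ → ℕ → ℂ × ℂ) (z : ℂ) : ℂ := (F z 0).1 - (F z 0).2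

def HasZeroOrder (f : ℂ → ℂ) (w : ℂ) (m : ℕ) : Prop :=
  ∃ g : ℂ → ℂ, AnalyticAt ℂ g w ∧ g w ≠ 0 ∧ ∀ᶠ x in 𝓝 w, f x = (x - w) ^ m * g x

def CMVStep (α : ℕ → ℂ) (z : ℂ) (k : ℕ) (prev cur : ℂ × ℂ) : Prop :=
  if Odd k then
    cur.1 = (α k * prev.1 + z * prev.2) / ((Real.sqrt (1 - ‖α k‖ ^ 2) : ℝ) : ℂ) ∧
    cur.2 = (prev.1 / z + conj (α k) * prev.2) / ((Real.sqrt (1 - ‖α k‖ ^ 2) : ℝ) : ℂ)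
  else
    cur.1 = (conj (α k) * prev.1 + prev.2) / ((Real.sqrt (1 - ‖α k‖ ^ 2) : ℝ) : ℂ) ∧
    cur.2 = (prev.1 + α k * prev.2) / ((Real.sqrt (1 - ‖α k‖ ^ 2) : ℝ) : ℂ)

end

lemma mobius_bound (A p w : ℂ) (s : ℝ) (ha : ‖A‖ ≤ 1) (hs0 : 0 ≤ s) (hs : s ≤ 1)
    (hw : ‖w‖ ≤ s * ‖p‖) :
    (1 + ‖A‖ * s) * ‖w - conj A * p‖ ≤
      (s + ‖A‖) * ‖p - A * w‖ := by
  set a := ‖A‖ with hadef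
  set P := ‖p‖
  set W := ‖w‖
  set X := (A * w * conj p).re with hX
  have ha0 : 0 ≤ a := norm_nonneg A
  have hP0 : 0 ≤ P := norm_nonneg p
  have hW0 : 0 ≤ W := norm_nonneg w
  have hL : ‖w - conj A * p‖ ^ 2 = W^2 + a^2*P^2 - 2*X := by
    rw [Complex.sq_norm, Complex.normSq_sub, Complex.normSq_mul, Complex.normSq_conj,
      map_mul, Complex.conj_conj, show w * (A * conj p) = A * w * conj p from by ring,
      ← Complex.sq_norm w, ← Complex.sq_norm A, ← Complex.sq_norm p, ← hX]
  have hR : ‖p - A * w‖ ^ 2 = P^2 + a^2*W^2 - 2*X := by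
    rw [Complex.sq_norm, Complex.normSq_sub, Complex.normSq_mul,
      map_mul, ← Complex.sq_norm w, ← Complex.sq_norm A, ← Complex.sq_norm p]
    have : (p * (conj A * conj w)).re = X := by
      rw [hX, show A * w * conj p = conj (p * (conj A * conj w)) from by
        simp [map_mul, Complex.conj_conj]; ring, Complex.conj_re]
    rw [this]
  have hXb : |X| ≤ a * W * P := by
    calc |X| ≤ ‖A * w * conj p‖ := Complex.abs_re_le_norm _
    _ = a * W * P := by simp [map_mul, Complex.norm_conj]; rfl
  have e1 : 0 ≤ (1 - a^2) * ((s*P - W) * ((1+a^2+2*a*s)*W + (s+a^2*s+2*a)*P)) := by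
    apply mul_nonneg (by nlinarith)
    apply mul_nonneg (by nlinarith)
    positivity
  have hX1 : -(a*W*P) ≤ X := (abs_le.mp hXb).1
  have e2 : 0 ≤ (1 - a^2) * (2*(1-s^2)*(X + a*W*P)) := by
    apply mul_nonneg (by nlinarith)
    apply mul_nonneg (by nlinarith) (by linarith)
  have key : ((1 + a*s) * ‖w - conj A * p‖)^2 ≤ ((s + a) * ‖p - A * w‖)^2 := by
    have expand : ((s + a) * ‖p - A * w‖)^2 - ((1 + a*s) * ‖w - conj A * p‖)^2
        = (1 - a^2) * ((s*P - W) * ((1+a^2+2*a*s)*W + (s+a^2*s+2*a)*P))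
          + (1 - a^2) * (2*(1-s^2)*(X + a*W*P)) := by
      rw [mul_pow, mul_pow, hL, hR]; ring
    linarith
  have hL0 : 0 ≤ (1 + a*s) * ‖w - conj A * p‖ := by positivity
  have hR0 : 0 ≤ (s + a) * ‖p - A * w‖ := by positivity
  nlinarith [key, hL0, hR0]

lemma step_ineq (β δ g a r h : ℝ) (hβ0 : 0 < β) (hβ : β ≤ 1/2) (hδ0 : 0 ≤ δ)
    (hδg : δ ≤ g) (hg : g ≤ 1/2) (ha0 : 0 ≤ a) (ha : a ≤ 1 - 2*β)
    (hr0 : 0 ≤ r) (hr : r ≤ 1 + δ) (hh : h = β*g + 6*δ*β - 6*δ) (hh0 : 0 ≤ h) :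
    r * (r*(1-g) + a) ≤ (1 - h) * (1 + a * (r * (1-g))) := by
  set s := r * (1-g) with hs
  have hg0 : 0 ≤ g := le_trans hδ0 hδg
  have hs0 : 0 ≤ s := by apply mul_nonneg hr0; linarith
  have hs1 : s ≤ 1 := by nlinarith
  have h1 : r * (s + a) ≤ (s + a) + 3*δ := by nlinarith
  have hsu : g - δ ≤ 1 - s := by nlinarith
  have h2 : 2*β*(g - δ) ≤ (1-a)*(1-s) := by
    calc 2*β*(g-δ) ≤ 2*β*(1-s) := by nlinarith
    _ ≤ (1-a)*(1-s) := by nlinarith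
  have has : a * s ≤ 1 := by nlinarith
  have h3 : h * (1 + a*s) ≤ h * 2 := by nlinarith
  have expand : (1 - h) * (1 + a * s) = 1 + a*s - h*(1+a*s) := by ring
  rw [expand]
  have hab : (1-a)*(1-s) = 1 + a*s - (s+a) := by ring
  nlinarith [mul_nonneg hδ0 hβ0.le]

lemma tsum_tail_mono {f : ℕ → ℝ} (hf : Summable f) (h0 : ∀ n, 0 ≤ f n) {i j : ℕ} (hij : i ≤ j) :
    ∑' n, f (j + n) ≤ ∑' n, f (i + n) := by
  obtain ⟨d, rfl⟩ := le_iff_exists_add.mp hij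
  have hsf : Summable fun n => f (i + n) :=
    ((summable_nat_add_iff i).mpr hf).congr (fun n => by rw [Nat.add_comm])
  have key := Summable.sum_add_tsum_nat_add (f := fun n => f (i + n)) d hsf
  have hre : ∑' n, f (i + (n + d)) = ∑' n, f (i + d + n) :=
    tsum_congr fun n => by congr 1; omega
  rw [hre] at key
  have : 0 ≤ ∑ n ∈ Finset.range d, f (i + n) := Finset.sum_nonneg fun n _ => h0 _
  linarith

lemma tprod_le_factor {f : ℕ → ℝ} (hm : Multipliable f) (h0 : ∀ n, 0 ≤ f n)
    (h1 : ∀ n, f n ≤ 1) (i : ℕ) : ∏' n, f n ≤ f i := by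
  refine le_of_tendsto hm.hasProd ?_
  rw [SummationFilter.unconditional_filter, eventually_atTop]
  refine ⟨{i}, fun s hs => ?_⟩
  have hi : i ∈ s := Finset.singleton_subset_iff.mp hs
  calc ∏ b ∈ s, f b = f i * ∏ b ∈ s.erase i, f b := (Finset.mul_prod_erase s f hi).symm
  _ ≤ f i * 1 := by
      apply mul_le_mul_of_nonneg_left _ (h0 i)
      exact Finset.prod_le_one (fun n _ => h0 n) (fun n _ => h1 n)
  _ = f i := mul_one _

lemma multipliable_one_sub (a : ℕ → ℝ) (h0 : ∀ n, 0 ≤ a n) (h1 : ∀ n, a n < 1)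
    (hs : Summable a) : Multipliable fun j => 1 - a j := by
  have htend : Tendsto a atTop (nhds 0) := hs.tendsto_atTop_zero
  obtain ⟨N, hN⟩ : ∃ N, ∀ n, N ≤ n → a n ≤ 1/2 := by
    have := (htend.eventually (eventually_le_nhds (by norm_num : (0:ℝ) < 1/2)))
    exact eventually_atTop.mp this
  have hlog : Summable fun n => Real.log (1 - a n) := by
    rw [← summable_nat_add_iff N]
    apply Summable.of_abs
    refine Summable.of_nonneg_of_le (fun n => abs_nonneg _) (fun n => ?_)
      (((summable_nat_add_iff N).mpr hs).mul_left 2)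
    ·
      set b := a (n + N) with hb
      have hb2 : b ≤ 1/2 := hN _ (by omega)
      have hb0 : 0 ≤ b := h0 _
      have hpos : (0:ℝ) < 1 - b := by linarith
      have hle1 : Real.log (1 - b) ≤ 0 := Real.log_nonpos (by linarith) (by linarith)
      rw [abs_of_nonpos hle1, ← Real.log_inv]
      have : Real.log (1 - b)⁻¹ ≤ (1 - b)⁻¹ - 1 :=
        Real.log_le_sub_one_of_pos (by positivity)
      have hc : (1 - b) * (1 - b)⁻¹ = 1 := mul_inv_cancel₀ (ne_of_gt hpos)
      have hinv0 : 0 < (1 - b)⁻¹ := by positivity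
      have hinv : (1 - b)⁻¹ ≤ 1 + 2*b := by nlinarith
      linarith
  exact Real.multipliable_of_summable_log (fun n => by have := h1 n; linarith) hlog

set_option maxHeartbeats 1000000 in
lemma gfun_summable {γ C : ℝ} (hγ : 1 < γ) (hC : 0 < C) :
    Summable (fun m : ℕ => C * Real.exp (-(m:ℝ)^γ) * 2^(m+2)) := by
  set q := 2 * Real.exp (-2) with hq
  have hq0 : 0 ≤ q := by positivity
  have hq1 : q < 1 := by
    have h3 : (3:ℝ) ≤ Real.exp 2 := by
      have := Real.add_one_le_exp (2:ℝ); linarith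
    have hinv : Real.exp (-2) ≤ 1/3 := by
      rw [Real.exp_neg]
      rw [inv_le_comm₀ (Real.exp_pos 2) (by norm_num)]
      linarith
    rw [hq]; linarith
  have hγ1 : (0:ℝ) < γ - 1 := by linarith
  set m₀ : ℕ := ⌈(2:ℝ)^((1:ℝ)/(γ-1))⌉₊ + 1 with hm₀
  have hmaj : ∀ n : ℕ, C * Real.exp (-((n + m₀ : ℕ):ℝ)^γ) * 2^((n + m₀) + 2) ≤ 4*C*q^(n + m₀) := by
    intro n
    set m : ℕ := n + m₀ with hm
    have hm1 : 1 ≤ m := by omega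
    have hm0R : (0:ℝ) < (m:ℝ) := by exact_mod_cast hm1
    have hcast : (2:ℝ)^((1:ℝ)/(γ-1)) ≤ (m:ℝ) := by
      have h1 : (2:ℝ)^((1:ℝ)/(γ-1)) ≤ (⌈(2:ℝ)^((1:ℝ)/(γ-1))⌉₊ : ℝ) := Nat.le_ceil _
      have h2 : (⌈(2:ℝ)^((1:ℝ)/(γ-1))⌉₊ : ℝ) ≤ (m:ℝ) := by
        have : ⌈(2:ℝ)^((1:ℝ)/(γ-1))⌉₊ ≤ m := by omega
        exact_mod_cast this
      linarith
    have hm2 : (2:ℝ) ≤ (m:ℝ)^(γ-1) := by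
      have := Real.rpow_le_rpow (Real.rpow_nonneg (by norm_num) _) hcast hγ1.le
      rwa [← Real.rpow_mul (by norm_num : (0:ℝ) ≤ 2), one_div_mul_cancel (ne_of_gt hγ1),
        Real.rpow_one] at this
    have hmγ : 2*(m:ℝ) ≤ (m:ℝ)^γ := by
      have : (m:ℝ)^γ = (m:ℝ) * (m:ℝ)^(γ-1) := by
        rw [show γ = 1 + (γ-1) by ring, Real.rpow_add hm0R, Real.rpow_one]
        ring_nf
      rw [this]; nlinarith
    have hexp : Real.exp (-((m:ℕ):ℝ)^γ) ≤ (Real.exp (-2))^m := by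
      rw [← Real.exp_nat_mul]
      apply Real.exp_le_exp.mpr
      push_cast
      linarith
    calc C * Real.exp (-((m:ℕ):ℝ)^γ) * 2^(m + 2)
        ≤ C * (Real.exp (-2))^m * 2^(m+2) := by
          apply mul_le_mul_of_nonneg_right _ (by positivity)
          exact mul_le_mul_of_nonneg_left hexp hC.le
      _ = 4*C*q^m := by rw [hq]; rw [mul_pow]; ring
  rw [← summable_nat_add_iff m₀]
  apply Summable.of_nonneg_of_le (fun n => by positivity) hmaj
  exact (summable_nat_add_iff m₀).mpr ((summable_geometric_of_lt_one hq0 hq1).mul_left (4*C))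

lemma jost_summable1 {α : ℕ → ℂ} {F : ℂ → ℕ → ℂ × ℂ} (hJ : IsJostSolution α F) (z : ℂ) (k : ℕ) :
    Summable (fun n : ℕ => α (k + 1 + n) * cmvZeta (k + 1 + n) z * (F z (k + 1 + n)).2) := by
  apply Summable.of_norm
  exact (hJ.2 z k).1

lemma jost_summable2 {α : ℕ → ℂ} {F : ℂ → ℕ → ℂ × ℂ} (hJ : IsJostSolution α F) (z : ℂ) (k : ℕ) :
    Summable (fun n : ℕ => z ^ n * conj (α (k + 1 + n)) * cmvZeta (k + 1) z * (F z (k + 1 + n)).1) := by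
  apply Summable.of_norm
  exact (hJ.2 z k).2.1

lemma jost_rec1 {α : ℕ → ℂ} {F : ℂ → ℕ → ℂ × ℂ} (hJ : IsJostSolution α F) (z : ℂ) (k : ℕ) :
    (F z k).1 = (F z (k+1)).1 - α (k+1) * cmvZeta (k+1) z * (F z (k+1)).2 := by
  have h1 := (hJ.2 z k).2.2.1
  have h2 := (hJ.2 z (k+1)).2.2.1
  have hsum := jost_summable1 hJ z k
  rw [Summable.tsum_eq_zero_add hsum] at h1
  have hshift : ∑' n : ℕ, α (k + 1 + (n+1)) * cmvZeta (k + 1 + (n+1)) z * (F z (k + 1 + (n+1))).2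
      = ∑' n : ℕ, α (k + 1 + 1 + n) * cmvZeta (k + 1 + 1 + n) z * (F z (k + 1 + 1 + n)).2 :=
    tsum_congr fun n => by rw [show k + 1 + (n+1) = k+1+1+n from by omega]
  rw [hshift] at h1
  rw [h1, h2]
  simp only [Nat.add_zero]
  ring

lemma jost_rec2_odd {α : ℕ → ℂ} {F : ℂ → ℕ → ℂ × ℂ} (hJ : IsJostSolution α F) (z : ℂ) (k : ℕ)
    (hk : Odd (k+1)) :
    (F z k).2 = -(conj (α (k+1)) * z * (F z (k+1)).1) + z^2 * (F z (k+1)).2 := by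
  have h1 := (hJ.2 z k).2.2.2
  have h2 := (hJ.2 z (k+1)).2.2.2
  have hsum := jost_summable2 hJ z k
  rw [Summable.tsum_eq_zero_add hsum] at h1
  have hz1 : cmvZeta (k+1) z = z := by simp [cmvZeta, hk]
  have hk2 : ¬ Odd (k+1+1) := by
    rw [Nat.odd_add_one]
    exact fun h => h hk
  have hz2 : cmvZeta (k+1+1) z = 1 := by simp [cmvZeta, hk2]
  have hshift : ∑' n:ℕ, z^(n+1) * conj (α (k+1+(n+1))) * cmvZeta (k+1) z * (F z (k+1+(n+1))).1
      = z^2 * ∑' n:ℕ, z^n * conj (α (k+1+1+n)) * cmvZeta (k+1+1) z * (F z (k+1+1+n)).1 := by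
    rw [← tsum_mul_left]
    exact tsum_congr fun n => by
      rw [show k+1+(n+1) = k+1+1+n from by omega, hz1, hz2]
      ring
  rw [hshift] at h1
  have hv : z^2 * ∑' n:ℕ, z^n * conj (α (k+1+1+n)) * cmvZeta (k+1+1) z * (F z (k+1+1+n)).1
      = -(z^2 * (F z (k+1)).2) := by rw [h2]; ring
  rw [hv] at h1
  rw [h1, hz1]
  simp only [pow_zero, Nat.add_zero]
  ring

lemma jost_rec2_even {α : ℕ → ℂ} {F : ℂ → ℕ → ℂ × ℂ} (hJ : IsJostSolution α F) (z : ℂ) (k : ℕ)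
    (hk : ¬ Odd (k+1)) :
    (F z k).2 = -(conj (α (k+1)) * (F z (k+1)).1) + (F z (k+1)).2 := by
  have h1 := (hJ.2 z k).2.2.2
  have h2 := (hJ.2 z (k+1)).2.2.2
  have hsum := jost_summable2 hJ z k
  rw [Summable.tsum_eq_zero_add hsum] at h1
  have hz1 : cmvZeta (k+1) z = 1 := by simp [cmvZeta, hk]
  have hk2 : Odd (k+1+1) := by
    rw [Nat.odd_add_one]
    exact hk
  have hz2 : cmvZeta (k+1+1) z = z := by simp [cmvZeta, hk2]
  have hshift : ∑' n:ℕ, z^(n+1) * conj (α (k+1+(n+1))) * cmvZeta (k+1) z * (F z (k+1+(n+1))).1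
      = ∑' n:ℕ, z^n * conj (α (k+1+1+n)) * cmvZeta (k+1+1) z * (F z (k+1+1+n)).1 := by
    exact tsum_congr fun n => by
      rw [show k+1+(n+1) = k+1+1+n from by omega, hz1, hz2]
      ring
  rw [hshift] at h1
  have hv : ∑' n:ℕ, z^n * conj (α (k+1+1+n)) * cmvZeta (k+1+1) z * (F z (k+1+1+n)).1
      = -(F z (k+1)).2 := by rw [h2, neg_neg]
  rw [hv] at h1
  rw [h1, hz1]
  simp only [pow_zero, Nat.add_zero]
  ring
set_option maxHeartbeats 2000000 in
theorem no_resonances_near_unit_circle (γ C Q : ℝ) (hγ : 1 < γ) (hC : 0 < C) (hQ : 1 < Q) :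
    ∃ δ : ℝ, 0 < δ ∧
      ∀ (α : ℕ → ℂ) (F : ℂ → ℕ → ℂ × ℂ), MemB0 γ C Q α → IsJostSolution α F →
        ∀ z : ℂ, ‖z‖ < 1 + δ → jostPi F z ≠ 0 := by
  classical
  set g : ℕ → ℝ := fun m => C * Real.exp (-(m:ℝ)^γ) * 2^(m+2) with hgdef
  have hg0 : ∀ m, 0 ≤ g m := fun m =>
    mul_nonneg (mul_nonneg hC.le (Real.exp_pos _).le) (by positivity)
  have hgsum : Summable g := gfun_summable hγ hC
  obtain ⟨K, hσ8⟩ : ∃ K : ℕ, ∑' n, g (K + 1 + n) ≤ 1/8 := by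
    have ht := tendsto_sum_nat_add (f := g)
    have hev := ht.eventually (eventually_le_nhds (by norm_num : (0:ℝ) < 1/8))
    obtain ⟨N, hN⟩ := eventually_atTop.mp hev
    refine ⟨N, ?_⟩
    have := hN (N+1) (by omega)
    calc ∑' n, g (N + 1 + n) = ∑' n, g (n + (N+1)) := tsum_congr fun n => by rw [Nat.add_comm]
    _ ≤ 1/8 := this
  set σ := ∑' n, g (K + 1 + n) with hσdef
  have hσ0 : 0 ≤ σ := tsum_nonneg (fun n => hg0 _)
  set β : ℝ := 1/(2*Q) with hβdef
  have hβ0 : 0 < β := by rw [hβdef]; positivity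
  have hβh : β < 1/2 := by
    rw [hβdef, div_lt_div_iff₀ (by linarith) (by norm_num)]
    linarith
  set δ := β^K/24 with hδdef
  have hβK1 : β^K ≤ 1 := pow_le_one₀ hβ0.le (by linarith)
  have hβKpos : 0 < β^K := pow_pos hβ0 K
  have hδ0 : 0 < δ := by rw [hδdef]; positivity
  have hδ1 : δ ≤ 1 := by rw [hδdef]; linarith
  have hδβK : β^K = 24*δ := by rw [hδdef]; ring
  refine ⟨δ, hδ0, ?_⟩
  rintro α F ⟨hα1, hαd, hαp⟩ hJ
  have hα0 : ∀ m, 0 ≤ ‖α m‖ := fun m => norm_nonneg _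
  -- each |α j| ≤ 1 - 2β
  have hsa : Summable (fun j => ‖α (j+1)‖) := by
    refine Summable.of_nonneg_of_le (fun j => hα0 _) (fun j => ?_)
      ((summable_nat_add_iff 1).mpr hgsum)
    calc ‖α (j+1)‖ ≤ C * Real.exp (-((j+1:ℕ):ℝ)^γ) := hαd (j+1) (by omega)
    _ ≤ g (j+1) := by
        rw [hgdef]
        exact le_mul_of_one_le_right (mul_nonneg hC.le (Real.exp_pos _).le) (one_le_pow₀ one_le_two)
  have hfac : ∀ j : ℕ, 1 ≤ j → ‖α j‖ ≤ 1 - 2*β := by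
    intro j hj
    have hmul : Multipliable (fun i => 1 - ‖α (i+1)‖) :=
      multipliable_one_sub _ (fun i => hα0 _) (fun i => hα1 _ (by omega)) hsa
    have hle := tprod_le_factor hmul
      (fun i => by have := hα1 (i+1) (by omega); linarith)
      (fun i => by have := hα0 (i+1); linarith) (j-1)
    have h1 : (1:ℝ)/Q ≤ 1 - ‖α ((j-1)+1)‖ := le_trans hαp hle
    rw [show (j-1)+1 = j from by omega] at h1
    have hQβ : 1/Q = 2*β := by rw [hβdef]; field_simp
    rw [hQβ] at h1
    linarith
  intro z hz
  set r := ‖z‖ with hrdef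
  have hr0 : 0 ≤ r := norm_nonneg z
  have hr : r < 1 + δ := hz
  obtain ⟨M₀, hM₀⟩ := hJ.1 z
  set M := max M₀ 0 with hMdef
  have hMnn : 0 ≤ M := le_max_right _ _
  have hcomp : ∀ k, ‖(F z k).1‖ ≤ M ∧ ‖(F z k).2‖ ≤ M := by
    intro k
    have h := hM₀ k
    have e1 : ‖(F z k).1‖ ≤ enorm2 (F z k) := by
      rw [show ‖(F z k).1‖ = Real.sqrt (‖(F z k).1‖^2) from
        (Real.sqrt_sq (norm_nonneg _)).symm]
      exact Real.sqrt_le_sqrt (le_add_of_nonneg_right (sq_nonneg _))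
    have e2 : ‖(F z k).2‖ ≤ enorm2 (F z k) := by
      rw [show ‖(F z k).2‖ = Real.sqrt (‖(F z k).2‖^2) from
        (Real.sqrt_sq (norm_nonneg _)).symm]
      exact Real.sqrt_le_sqrt (le_add_of_nonneg_left (sq_nonneg _))
    exact ⟨le_trans (e1.trans h) (le_max_left _ _), le_trans (e2.trans h) (le_max_left _ _)⟩
  have hζ : ∀ n, ‖cmvZeta n z‖ ≤ 1 + δ := by
    intro n
    by_cases h : Odd n
    · simp only [cmvZeta, if_pos h]; exact hz.le
    · simp only [cmvZeta, if_neg h, norm_one]; linarith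
  -- termwise bounds
  have hterm1 : ∀ k n (B:ℝ), 0 ≤ B → ‖(F z (k+1+n)).2‖ ≤ B →
      ‖α (k+1+n) * cmvZeta (k+1+n) z * (F z (k+1+n)).2‖ ≤ g (k+1+n) * B := by
    intro k n B hB0 hB
    rw [norm_mul, norm_mul]
    have ha := hαd (k+1+n) (by omega)
    have h2 : (1:ℝ)+δ ≤ 2^((k+1+n)+2) := by
      have h21 : (2:ℝ) ≤ 2^((k+1+n)+2) := by
        calc (2:ℝ) = 2^1 := (pow_one 2).symm
        _ ≤ 2^((k+1+n)+2) := pow_le_pow_right₀ one_le_two (by omega)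
      linarith
    calc ‖α (k+1+n)‖ * ‖cmvZeta (k+1+n) z‖ * ‖(F z (k+1+n)).2‖
        ≤ (C * Real.exp (-((k+1+n:ℕ):ℝ)^γ)) * (1+δ) * B := by
          apply mul_le_mul _ hB (norm_nonneg _)
            (mul_nonneg (mul_nonneg hC.le (Real.exp_pos _).le) (by linarith))
          exact mul_le_mul ha (hζ _) (norm_nonneg _)
            (mul_nonneg hC.le (Real.exp_pos _).le)
      _ ≤ g (k+1+n) * B := by
          rw [hgdef]
          apply mul_le_mul_of_nonneg_right _ hB0
          exact mul_le_mul_of_nonneg_left h2 (mul_nonneg hC.le (Real.exp_pos _).le)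
  have hterm2 : ∀ k n (B:ℝ), 0 ≤ B → ‖(F z (k+1+n)).1‖ ≤ B →
      ‖z^n * conj (α (k+1+n)) * cmvZeta (k+1) z * (F z (k+1+n)).1‖ ≤ g (k+1+n) * B := by
    intro k n B hB0 hB
    rw [norm_mul, norm_mul, norm_mul, norm_pow]
    have ha : ‖conj (α (k+1+n))‖ ≤ C * Real.exp (-((k+1+n:ℕ):ℝ)^γ) := by
      rw [Complex.norm_conj]; exact hαd (k+1+n) (by omega)
    have hrn : r^n ≤ (1+δ)^n := pow_le_pow_left₀ hr0 hr.le n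
    have hpow : ((1:ℝ)+δ)^n * (1+δ) ≤ 2^((k+1+n)+2) := by
      have e1 : ((1:ℝ)+δ)^n * (1+δ) = (1+δ)^(n+1) := by rw [pow_succ]
      have e2 : ((1:ℝ)+δ)^(n+1) ≤ 2^(n+1) := pow_le_pow_left₀ (by linarith) (by linarith) (n+1)
      have e3 : (2:ℝ)^(n+1) ≤ 2^((k+1+n)+2) := pow_le_pow_right₀ one_le_two (by omega)
      linarith [e1 ▸ e2.trans e3]
    have hCe : 0 ≤ C * Real.exp (-((k+1+n:ℕ):ℝ)^γ) := mul_nonneg hC.le (Real.exp_pos _).le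
    calc ‖z‖ ^ n * ‖conj (α (k+1+n))‖ * ‖cmvZeta (k+1) z‖ *
          ‖(F z (k+1+n)).1‖
        ≤ (1+δ)^n * (C * Real.exp (-((k+1+n:ℕ):ℝ)^γ)) * (1+δ) * B := by
          apply mul_le_mul _ hB (norm_nonneg _) (by positivity)
          apply mul_le_mul _ (hζ _) (norm_nonneg _) (by positivity)
          exact mul_le_mul hrn ha (norm_nonneg _) (by positivity)
      _ = (C * Real.exp (-((k+1+n:ℕ):ℝ)^γ)) * ((1+δ)^n * (1+δ)) * B := by ring
      _ ≤ g (k+1+n) * B := by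
          rw [hgdef]
          apply mul_le_mul_of_nonneg_right _ hB0
          exact mul_le_mul_of_nonneg_left hpow hCe
  -- tail-sum bounds
  have hgtail : ∀ k, K ≤ k → Summable (fun n => g (k+1+n)) ∧ ∑' n, g (k+1+n) ≤ σ := by
    intro k hk
    constructor
    · exact ((summable_nat_add_iff (k+1)).mpr hgsum).congr (fun n => by rw [Nat.add_comm])
    · exact tsum_tail_mono hgsum hg0 (show K+1 ≤ k+1 by omega)
  have hsum1 : ∀ k, K ≤ k → ∀ B:ℝ, 0 ≤ B → (∀ n : ℕ, ‖(F z (k+1+n)).2‖ ≤ B) →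
      ‖(F z k).1 - 1‖ ≤ σ * B := by
    intro k hk B hB0 hB
    have heq := (hJ.2 z k).2.2.1
    have habs := (hJ.2 z k).1
    have hgs : Summable (fun n => g (k+1+n) * B) := ((hgtail k hk).1).mul_right B
    have hrw : (F z k).1 - 1 = -(∑' n:ℕ, α (k+1+n) * cmvZeta (k+1+n) z * (F z (k+1+n)).2) := by
      rw [heq]; ring
    rw [hrw, norm_neg]
    calc ‖∑' n:ℕ, α (k+1+n) * cmvZeta (k+1+n) z * (F z (k+1+n)).2‖
        = ‖∑' n:ℕ, α (k+1+n) * cmvZeta (k+1+n) z * (F z (k+1+n)).2‖ := rfl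
      _ ≤ ∑' n:ℕ, ‖α (k+1+n) * cmvZeta (k+1+n) z * (F z (k+1+n)).2‖ :=
          norm_tsum_le_tsum_norm habs
      _ = ∑' n:ℕ, ‖α (k+1+n) * cmvZeta (k+1+n) z * (F z (k+1+n)).2‖ := by
          rfl
      _ ≤ ∑' n:ℕ, g (k+1+n) * B :=
          Summable.tsum_le_tsum (fun n => hterm1 k n B hB0 (hB n)) habs hgs
      _ = (∑' n:ℕ, g (k+1+n)) * B := tsum_mul_right
      _ ≤ σ * B := mul_le_mul_of_nonneg_right (hgtail k hk).2 hB0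
  have hsum2 : ∀ k, K ≤ k → ∀ B:ℝ, 0 ≤ B → (∀ n : ℕ, ‖(F z (k+1+n)).1‖ ≤ B) →
      ‖(F z k).2‖ ≤ σ * B := by
    intro k hk B hB0 hB
    have heq := (hJ.2 z k).2.2.2
    have habs := (hJ.2 z k).2.1
    have hgs : Summable (fun n => g (k+1+n) * B) := ((hgtail k hk).1).mul_right B
    rw [heq, norm_neg]
    calc ‖∑' n:ℕ, z^n * conj (α (k+1+n)) * cmvZeta (k+1) z * (F z (k+1+n)).1‖
        = ‖∑' n:ℕ, z^n * conj (α (k+1+n)) * cmvZeta (k+1) z * (F z (k+1+n)).1‖ :=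
          rfl
      _ ≤ ∑' n:ℕ, ‖z^n * conj (α (k+1+n)) * cmvZeta (k+1) z * (F z (k+1+n)).1‖ :=
          norm_tsum_le_tsum_norm habs
      _ = ∑' n:ℕ, ‖z^n * conj (α (k+1+n)) * cmvZeta (k+1) z * (F z (k+1+n)).1‖ := by
          rfl
      _ ≤ ∑' n:ℕ, g (k+1+n) * B :=
          Summable.tsum_le_tsum (fun n => hterm2 k n B hB0 (hB n)) habs hgs
      _ = (∑' n:ℕ, g (k+1+n)) * B := tsum_mul_right
      _ ≤ σ * B := mul_le_mul_of_nonneg_right (hgtail k hk).2 hB0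
  -- bootstrap
  have boot : ∀ j : ℕ, ∀ k, K ≤ k →
      ‖(F z k).1‖ ≤ 2 + σ^j * M ∧ ‖(F z k).2‖ ≤ 2*σ + σ^j * M := by
    intro j
    induction j with
    | zero =>
      intro k hk
      simp only [pow_zero, one_mul]
      exact ⟨le_trans (hcomp k).1 (by linarith), le_trans (hcomp k).2 (by linarith)⟩
    | succ j ih =>
      intro k hk
      have hBn1 : 0 ≤ 2 + σ^j*M := by positivity
      have hBn2 : 0 ≤ 2*σ + σ^j*M := by positivity
      have h2 : ‖(F z k).2‖ ≤ σ * (2 + σ^j*M) :=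
        hsum2 k hk _ hBn1 (fun n => (ih (k+1+n) (by omega)).1)
      have h1 : ‖(F z k).1 - 1‖ ≤ σ * (2*σ + σ^j*M) :=
        hsum1 k hk _ hBn2 (fun n => (ih (k+1+n) (by omega)).2)
      have hps : σ^(j+1) = σ^j * σ := pow_succ σ j
      constructor
      · have htri : ‖(F z k).1‖ ≤ 1 + ‖(F z k).1 - 1‖ := by
          have h := norm_add_le 1 ((F z k).1 - 1)
          rw [show (1:ℂ) + ((F z k).1 - 1) = (F z k).1 from by ring] at h
          simpa using h
        nlinarith [mul_nonneg (pow_nonneg hσ0 j) hMnn]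
      · rw [hps]; nlinarith
  have hσlt : σ < 1 := lt_of_le_of_lt hσ8 (by norm_num)
  have hF2b : ∀ k, K ≤ k → ‖(F z k).2‖ ≤ 2*σ := by
    intro k hk
    have h0 : Tendsto (fun j : ℕ => σ^j) atTop (𝓝 0) :=
      tendsto_pow_atTop_nhds_zero_of_lt_one hσ0 hσlt
    have htend : Tendsto (fun j : ℕ => 2*σ + σ^j*M) atTop (𝓝 (2*σ)) := by
      have := (h0.mul_const M).const_add (2*σ)
      simpa using this
    exact ge_of_tendsto' htend (fun j => (boot j k hk).2)
  have hF1K : 3/4 ≤ ‖(F z K).1‖ := by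
    have h1 : ‖(F z K).1 - 1‖ ≤ σ * (2*σ) :=
      hsum1 K le_rfl (2*σ) (by linarith) (fun n => hF2b (K+1+n) (by omega))
    have htri : 1 - ‖(F z K).1 - 1‖ ≤ ‖(F z K).1‖ := by
      have h := norm_sub_norm_le (1:ℂ) (1 - (F z K).1)
      rw [show (1:ℂ) - (1 - (F z K).1) = (F z K).1 from by ring, norm_sub_rev] at h
      simpa using h
    nlinarith
  -- downward induction
  have down : ∀ i : ℕ, i ≤ K →
      ‖(F z (K-i)).2‖ ≤ (1 - (β^i/2 - 6*δ)) * ‖(F z (K-i)).1‖ ∧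
      0 < ‖(F z (K-i)).1‖ := by
    intro i
    induction i with
    | zero =>
      intro _
      simp only [Nat.sub_zero, pow_zero]
      constructor
      · have h2 := hF2b K le_rfl
        nlinarith [hF1K]
      · linarith [hF1K]
    | succ i ih =>
      intro hi1
      obtain ⟨ihm, ihp⟩ := ih (by omega)
      have hk1 : (K - i) = (K - (i+1)) + 1 := by omega
      rw [hk1] at ihm ihp
      set k := K - (i+1) with hkdef
      set p := (F z (k+1)).1 with hp
      set q := (F z (k+1)).2 with hq
      set A := α (k+1) with hA
      set a := ‖A‖ with ha
      have ha0 : 0 ≤ a := norm_nonneg _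
      have haQ : a ≤ 1 - 2*β := hfac (k+1) (by omega)
      set gI := β^i/2 - 6*δ with hgI
      have hβK : β^K ≤ β^i := pow_le_pow_of_le_one hβ0.le (by linarith) (by omega)
      have hβK' : β^K ≤ β^(i+1) := pow_le_pow_of_le_one hβ0.le (by linarith) (by omega)
      have hδg : δ ≤ gI := by rw [hgI]; linarith
      have hβi1 : β^i ≤ 1 := pow_le_one₀ hβ0.le (by linarith)
      have hg12 : gI ≤ 1/2 := by rw [hgI]; linarith
      have hhnew : (0:ℝ) ≤ β^(i+1)/2 - 6*δ := by linarith
      have hhrel : β^(i+1)/2 - 6*δ = β*gI + 6*δ*β - 6*δ := by rw [hgI, pow_succ]; ring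
      have hgI1 : gI ≤ 1 := le_trans hg12 (by norm_num)
      by_cases hpar : Odd (k+1)
      · -- step uses z
        have hrec1 : (F z k).1 = p - A * (z * q) := by
          rw [jost_rec1 hJ z k]
          simp only [cmvZeta, if_pos hpar, ← hp, ← hq, ← hA]
          ring
        have hrec2 : (F z k).2 = z * (z * q - conj A * p) := by
          rw [jost_rec2_odd hJ z k hpar]
          ring
        set s := r * (1 - gI) with hs
        have hs0 : 0 ≤ s := mul_nonneg hr0 (by linarith)
        have hs1 : s ≤ 1 := by rw [hs]; nlinarith
        have hw : ‖z * q‖ ≤ s * ‖p‖ := by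
          rw [norm_mul, ← hrdef, hs]
          calc r * ‖q‖ ≤ r * ((1 - gI)*‖p‖) :=
            mul_le_mul_of_nonneg_left ihm hr0
          _ = r * (1-gI) * ‖p‖ := by ring
        have mob := mobius_bound A p (z*q) s (by linarith) hs0 hs1 hw
        have hstep := step_ineq β δ gI a r (β^(i+1)/2 - 6*δ) hβ0 hβh.le hδ0.le hδg hg12
          ha0 haQ hr0 hr.le hhrel hhnew
        rw [← hs] at hstep
        have hpos1 : (0:ℝ) < 1 + a*s := by nlinarith
        have has : a*s ≤ 1-2*β := by nlinarith
        constructor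
        · have key : (1 + a*s) * ‖(F z k).2‖
              ≤ (1 + a*s) * ((1 - (β^(i+1)/2 - 6*δ)) * ‖(F z k).1‖) := by
            rw [hrec1, hrec2, norm_mul, ← hrdef]
            calc (1+a*s) * (r * ‖z*q - conj A*p‖)
                = r * ((1+a*s) * ‖z*q - conj A*p‖) := by ring
              _ ≤ r * ((s+a) * ‖p - A*(z*q)‖) := mul_le_mul_of_nonneg_left mob hr0
              _ = (r*(s+a)) * ‖p - A*(z*q)‖ := by ring
              _ ≤ ((1 - (β^(i+1)/2 - 6*δ))*(1+a*s)) * ‖p - A*(z*q)‖ :=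
                  mul_le_mul_of_nonneg_right hstep (norm_nonneg _)
              _ = (1+a*s) * ((1 - (β^(i+1)/2 - 6*δ)) * ‖p - A*(z*q)‖) := by ring
          exact le_of_mul_le_mul_left key hpos1
        · have htri : ‖p‖ - ‖A*(z*q)‖ ≤ ‖p - A*(z*q)‖ := by
            simpa using norm_sub_norm_le p (A*(z*q))
          have hAz : ‖A*(z*q)‖ ≤ a * (s*‖p‖) := by
            rw [norm_mul, ← ha]
            exact mul_le_mul_of_nonneg_left hw ha0
          have hasP : a*(s*‖p‖) ≤ (1-2*β)*‖p‖ := by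
            nlinarith [norm_nonneg p, has]
          rw [hrec1]
          have hbp : 0 < β * ‖p‖ := mul_pos hβ0 ihp
          linarith [htri, hAz, hasP, ihp, hbp]
      · -- step without z
        have hrec1 : (F z k).1 = p - A * q := by
          rw [jost_rec1 hJ z k]
          simp only [cmvZeta, if_neg hpar, ← hp, ← hq, ← hA]
          ring
        have hrec2 : (F z k).2 = q - conj A * p := by
          rw [jost_rec2_even hJ z k hpar]
          ring
        set s := (1:ℝ) * (1 - gI) with hs
        have hs0 : 0 ≤ s := by rw [hs]; linarith
        have hs1 : s ≤ 1 := by rw [hs]; linarith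
        have hw : ‖q‖ ≤ s * ‖p‖ := by
          rw [hs]; calc ‖q‖ ≤ (1-gI) * ‖p‖ := ihm
          _ = 1 * (1-gI) * ‖p‖ := by ring
        have mob := mobius_bound A p q s (by linarith) hs0 hs1 hw
        have hstep := step_ineq β δ gI a 1 (β^(i+1)/2 - 6*δ) hβ0 hβh.le hδ0.le hδg hg12
          ha0 haQ zero_le_one (by linarith) hhrel hhnew
        rw [← hs] at hstep
        have hpos1 : (0:ℝ) < 1 + a*s := by nlinarith
        constructor
        · have c3 : (s+a) * ‖p - A*q‖
              ≤ ((1 - (β^(i+1)/2 - 6*δ)) * (1+a*s)) * ‖p - A*q‖ := by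
            apply mul_le_mul_of_nonneg_right _ (norm_nonneg _)
            linarith [hstep]
          have c4 : (1 + a*s) * ‖(F z k).2‖
              ≤ (1 + a*s) * ((1 - (β^(i+1)/2 - 6*δ)) * ‖(F z k).1‖) := by
            rw [hrec1, hrec2]
            calc (1 + a*s) * ‖q - conj A * p‖
                ≤ (s+a) * ‖p - A*q‖ := mob
              _ ≤ ((1 - (β^(i+1)/2 - 6*δ)) * (1+a*s)) * ‖p - A*q‖ := c3
              _ = (1 + a*s) * ((1 - (β^(i+1)/2 - 6*δ)) * ‖p - A*q‖) := by ring
          exact le_of_mul_le_mul_left c4 hpos1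
        · have htri : ‖p‖ - ‖A*q‖ ≤ ‖p - A*q‖ := by
            simpa using norm_sub_norm_le p (A*q)
          have hAz : ‖A*q‖ ≤ a * (s*‖p‖) := by
            rw [norm_mul, ← ha]
            exact mul_le_mul_of_nonneg_left hw ha0
          have has : a*s ≤ 1-2*β := by nlinarith
          have hasP : a*(s*‖p‖) ≤ (1-2*β)*‖p‖ := by
            nlinarith [norm_nonneg p, has]
          rw [hrec1]
          have hbp : 0 < β * ‖p‖ := mul_pos hβ0 ihp
          linarith [htri, hAz, hasP, ihp, hbp]
  -- conclusion
  have final := down K le_rfl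
  rw [Nat.sub_self] at final
  obtain ⟨fm, fp⟩ := final
  intro h0
  have heq : (F z 0).1 = (F z 0).2 := by
    have := sub_eq_zero.mp h0
    exact this
  rw [← heq] at fm
  nlinarith [fp, hδ0]
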